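/- Let Y ∈ ℕ^{n×m}, M ∈ ℝ^{n×m}, let A be a Kirchhoff matrix and T ∈ ℝ^{n×n} a diagonal matrix with strictly positive diagonal entries such that Y·A = T⁻¹·M. Let Φ_T be the diagonal matrix with (Φ_T)_{jj} = ∏_i (T_{ii})^{Y_{ij}}, and set A' = A·Φ_T. Suppose x : ℝ → ℝ^n is differentiable, takes strictly positive values, and satisfies x'(t) = M·ψ(x(t)) for all t, where ψ is the monomial map associated with Y. Then A' is a Kirchhoff matrix and the transformed function x̄(t) = T⁻¹·x(t) satisfies x̄'(t) = Y·A'·ψ(x̄(t)) for all t. -/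

import Mathlib

/-- A Kirchhoff matrix: nonnegative off-diagonal entries, zero column sums. -/
def IsKirchhoff {m : ℕ} (A : Matrix (Fin m) (Fin m) ℝ) : Prop :=
  (∀ i j, i ≠ j → 0 ≤ A i j) ∧ ∀ j, ∑ i, A i j = 0

/-- The support (reaction graph structure) of a matrix: off-diagonal positive entries. -/
def kirchhoffSupport {m : ℕ} (A : Matrix (Fin m) (Fin m) ℝ) : Set (Fin m × Fin m) :=
  {p | p.1 ≠ p.2 ∧ 0 < A p.1 p.2}

/-- A linearly conjugate realization of (Y, M): D positive diagonal, A Kirchhoff, Y·A = D·M. -/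
def IsLinConjReal {n m : ℕ} (Y : Matrix (Fin n) (Fin m) ℕ) (M : Matrix (Fin n) (Fin m) ℝ)
    (D : Matrix (Fin n) (Fin n) ℝ) (A : Matrix (Fin m) (Fin m) ℝ) : Prop :=
  D.IsDiag ∧ (∀ i, 0 < D i i) ∧ IsKirchhoff A ∧
    (Y.map (Nat.cast : ℕ → ℝ)) * A = D * M

/-- The monomial map associated with Y. -/
def psi {n m : ℕ} (Y : Matrix (Fin n) (Fin m) ℕ) (x : Fin n → ℝ) : Fin m → ℝ :=
  fun j => ∏ i, x i ^ Y i j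

theorem linear_conjugacy_dynamics {n m : ℕ}
    (Y : Matrix (Fin n) (Fin m) ℕ) (M : Matrix (Fin n) (Fin m) ℝ)
    (A : Matrix (Fin m) (Fin m) ℝ) (T : Matrix (Fin n) (Fin n) ℝ)
    (hA : IsKirchhoff A) (hTd : T.IsDiag) (hTp : ∀ i, 0 < T i i)
    (hYA : (Y.map (Nat.cast : ℕ → ℝ)) * A = T⁻¹ * M)
    (Φ : Matrix (Fin m) (Fin m) ℝ)
    (hΦ : Φ = Matrix.diagonal (fun j => ∏ i, (T i i) ^ Y i j))
    (A' : Matrix (Fin m) (Fin m) ℝ) (hA' : A' = A * Φ)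
    (x : ℝ → Fin n → ℝ) (hx : ∀ t i, 0 < x t i)
    (hdyn : ∀ t, HasDerivAt x (M.mulVec (psi Y (x t))) t) :
    IsKirchhoff A' ∧
      ∀ t, HasDerivAt (fun s => T⁻¹.mulVec (x s))
        (((Y.map (Nat.cast : ℕ → ℝ)) * A').mulVec (psi Y (T⁻¹.mulVec (x t)))) t := by
  set d : Fin n → ℝ := fun i => T i i with hd
  have hT : T = Matrix.diagonal d := by
    ext i j
    by_cases h : i = j
    · subst h; simp [Matrix.diagonal, hd]
    · simp [Matrix.diagonal, h, hTd h]
  have hdne : ∀ i, d i ≠ 0 := fun i => (hTp i).ne'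
  have hTinv : T⁻¹ = Matrix.diagonal (fun i => (d i)⁻¹) := by
    rw [hT]
    apply Matrix.inv_eq_right_inv
    rw [Matrix.diagonal_mul_diagonal]
    convert Matrix.diagonal_one using 2
    ext i
    exact mul_inv_cancel₀ (hdne i)
  have hc : ∀ j, 0 < ∏ i, (T i i) ^ Y i j := fun j =>
    Finset.prod_pos fun i _ => pow_pos (hTp i) _
  have hA'entry : ∀ i j, A' i j = A i j * ∏ k, (T k k) ^ Y k j := by
    intro i j
    rw [hA', hΦ, Matrix.mul_diagonal]
  have hK : IsKirchhoff A' := by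
    constructor
    · intro i j hij
      rw [hA'entry]
      exact mul_nonneg (hA.1 i j hij) (hc j).le
    · intro j
      simp only [hA'entry]
      rw [← Finset.sum_mul, hA.2 j, zero_mul]
  refine ⟨hK, fun t => ?_⟩
  -- key monomial identity
  have hpsi : ∀ v : Fin n → ℝ, Φ.mulVec (psi Y (T⁻¹.mulVec v)) = psi Y v := by
    intro v
    funext j
    rw [hΦ]
    rw [Matrix.mulVec_diagonal]
    have hxb : ∀ i, T⁻¹.mulVec v i = (d i)⁻¹ * v i := by
      intro i; rw [hTinv, Matrix.mulVec_diagonal]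
    simp only [psi, hxb]
    rw [← Finset.prod_mul_distrib]
    apply Finset.prod_congr rfl
    intro i _
    rw [← mul_pow, ← mul_assoc, mul_inv_cancel₀ (hdne i), one_mul]
  -- rewrite the target vector field
  have hvf : ((Y.map (Nat.cast : ℕ → ℝ)) * A').mulVec (psi Y (T⁻¹.mulVec (x t)))
      = T⁻¹.mulVec (M.mulVec (psi Y (x t))) := by
    rw [hA', ← Matrix.mul_assoc, ← Matrix.mulVec_mulVec, hpsi, hYA,
      ← Matrix.mulVec_mulVec]
  rw [hvf]
  -- derivative of the linearly transformed trajectory, componentwise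
  apply hasDerivAt_pi.mpr
  intro i
  have hcomp : ∀ w : Fin n → ℝ, T⁻¹.mulVec w i = (d i)⁻¹ * w i := by
    intro w; rw [hTinv, Matrix.mulVec_diagonal]
  simp only [hcomp]
  exact ((hasDerivAt_pi.mp (hdyn t)) i).const_mul ((d i)⁻¹)
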